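/- Let k be a field, H a commutative Hopf algebra over k, A a right H-comodule algebra with structure map ρ : A → A ⊗_k H, and B := A^{coH} its coinvariant subalgebra. Suppose there exists a total integral φ : H → A. Then for every B-module M, the map M → (M ⊗_B A)^{coH} sending m ↦ m ⊗ 1 is an isomorphism of B-modules. -/

import Mathlib

open TensorProduct

/-- The coinvariant subalgebra `B = A^{coH} = {a ∈ A : ρ a = a ⊗ 1}` of a right
`H`-comodule algebra `A`. -/
def coinvariants (k H A : Type*) [Field k] [CommRing H] [HopfAlgebra k H]
    [CommRing A] [Algebra k A] (ρ : A →ₐ[k] A ⊗[k] H) : Subalgebra k A where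
  carrier := {a | ρ a = a ⊗ₜ[k] 1}
  mul_mem' := by
    intro a b ha hb
    simp only [Set.mem_setOf_eq] at *
    rw [map_mul, ha, hb, Algebra.TensorProduct.tmul_mul_tmul, mul_one]
  one_mem' := by
    simp only [Set.mem_setOf_eq, map_one, Algebra.TensorProduct.one_def]
  add_mem' := by
    intro a b ha hb
    simp only [Set.mem_setOf_eq] at *
    rw [map_add, ha, hb, TensorProduct.add_tmul]
  algebraMap_mem' := fun c => by
    simp only [Set.mem_setOf_eq, AlgHom.commutes, Algebra.TensorProduct.algebraMap_apply]

open Coalgebra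

section Conv
variable {k H C : Type*} [CommSemiring k] [AddCommMonoid H] [Module k H] [Coalgebra k H]
  [CommSemiring C] [Algebra k C]

noncomputable def myconv (f g : H →ₗ[k] C) : H →ₗ[k] C :=
  LinearMap.mul' k C ∘ₗ TensorProduct.map f g ∘ₗ Coalgebra.comul

lemma myconv_repr {ι : Type*} (f g : H →ₗ[k] C) {a : H} (r : Coalgebra.Repr k a ι) :
    myconv f g a = ∑ i ∈ r.index, f (r.left i) * g (r.right i) := by
  simp only [myconv, LinearMap.comp_apply, ← r.eq, map_sum, TensorProduct.map_tmul,
    LinearMap.mul'_apply]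

end Conv

section Conv2
variable {k H C : Type*} [CommSemiring k] [AddCommMonoid H] [Module k H] [Coalgebra k H]
  [CommSemiring C] [Algebra k C]

noncomputable def convOne : H →ₗ[k] C := (Algebra.linearMap k C) ∘ₗ Coalgebra.counit

lemma myconv_assoc (f g h : H →ₗ[k] C) : myconv (myconv f g) h = myconv f (myconv g h) := by
  ext a
  set r := ℛ k a with hr
  set r₁ : (i : r.ι) → Coalgebra.Repr k (r.left i) (H × H) := fun i => ℛ k (r.left i) with hr₁
  set r₂ : (i : r.ι) → Coalgebra.Repr k (r.right i) (H × H) := fun i => ℛ k (r.right i) with hr₂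
  have key := sum_map_tmul_tmul_eq (R := k) f g h a (repr := r) (a₁ := r₁) (a₂ := r₂)
  apply_fun (LinearMap.mul' k C ∘ₗ LinearMap.lTensor C (LinearMap.mul' k C)) at key
  simp only [map_sum, LinearMap.comp_apply, LinearMap.lTensor_tmul, LinearMap.mul'_apply] at key
  rw [myconv_repr _ _ r, myconv_repr _ _ r]
  calc ∑ i ∈ r.index, myconv f g (r.left i) * h (r.right i)
      = ∑ i ∈ r.index, ∑ j ∈ (r₁ i).index,
          f ((r₁ i).left j) * (g ((r₁ i).right j) * h (r.right i)) := by
        refine Finset.sum_congr rfl fun i _ => ?_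
        rw [myconv_repr _ _ (r₁ i), Finset.sum_mul]
        exact Finset.sum_congr rfl fun j _ => mul_assoc _ _ _
    _ = ∑ i ∈ r.index, ∑ j ∈ (r₂ i).index,
          f (r.left i) * (g ((r₂ i).left j) * h ((r₂ i).right j)) := key.symm
    _ = ∑ i ∈ r.index, f (r.left i) * myconv g h (r.right i) := by
        refine Finset.sum_congr rfl fun i _ => ?_
        rw [myconv_repr _ _ (r₂ i), Finset.mul_sum]

lemma myconv_one_right (f : H →ₗ[k] C) : myconv f convOne = f := by
  ext a
  set r := ℛ k a with hr
  rw [myconv_repr _ _ r]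
  have key := Coalgebra.sum_tmul_counit_eq (R := k) r
  apply_fun (TensorProduct.rid k H) at key
  simp only [map_sum, TensorProduct.rid_tmul] at key
  calc ∑ i ∈ r.index, f (r.left i) * convOne (r.right i)
      = ∑ i ∈ r.index, f (Coalgebra.counit (R := k) (r.right i) • r.left i) := by
        refine Finset.sum_congr rfl fun i _ => ?_
        simp [convOne, Algebra.smul_def, mul_comm]
    _ = f a := by rw [← map_sum, key]; simp

lemma myconv_one_left (f : H →ₗ[k] C) : myconv convOne f = f := by
  ext a
  set r := ℛ k a with hr
  rw [myconv_repr _ _ r]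
  have key := Coalgebra.sum_counit_tmul_eq (R := k) r
  apply_fun (TensorProduct.lid k H) at key
  simp only [map_sum, TensorProduct.lid_tmul] at key
  calc ∑ i ∈ r.index, convOne (r.left i) * f (r.right i)
      = ∑ i ∈ r.index, f (Coalgebra.counit (R := k) (r.left i) • r.right i) := by
        refine Finset.sum_congr rfl fun i _ => ?_
        simp [convOne, Algebra.smul_def]
    _ = f a := by rw [← map_sum, key]; simp

end Conv2

section Hopf
open HopfAlgebra
variable {k H : Type*} [CommSemiring k] [CommSemiring H] [HopfAlgebra k H]

lemma my_antipode_one : antipode (R := k) (A := H) 1 = 1 := by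
  have := mul_antipode_rTensor_comul_apply (R := k) (A := H) (a := 1)
  simpa [Algebra.TensorProduct.one_def] using this

/-- `Δ : H →ₗ H ⊗ H` as a plain linear map. -/
noncomputable def Dmap : H →ₗ[k] H ⊗[k] H := Coalgebra.comul

lemma myconv_D_DS :
    myconv (Dmap (k := k) (H := H)) (Dmap ∘ₗ antipode k) = convOne := by
  ext a
  set r := ℛ k a with hr
  rw [myconv_repr _ _ r]
  calc ∑ i ∈ r.index, Dmap (k := k) (r.left i) * (Dmap ∘ₗ antipode k) (r.right i)
      = Coalgebra.comul (R := k) (∑ i ∈ r.index, r.left i * antipode (R := k) (r.right i)) := by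
        simp only [map_sum, Dmap, LinearMap.comp_apply]
        exact Finset.sum_congr rfl fun i _ => (Bialgebra.comul_mul _ _).symm
    _ = convOne a := by
        rw [sum_mul_antipode_eq_smul r]
        simp [convOne, Algebra.smul_def]
end Hopf

section Hopf2
open HopfAlgebra
variable {k H : Type*} [CommSemiring k] [CommSemiring H] [HopfAlgebra k H]

lemma theta (x y : H) :
    myconv (((TensorProduct.mk k H H).flip (antipode (R := k) x)) ∘ₗ antipode k) (Dmap (k := k)) y
      = 1 ⊗ₜ[k] (antipode (R := k) x * y) := by
  set S : H →ₗ[k] H := antipode (R := k) with hS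
  set r := ℛ k y with hr
  set r₁ : (i : r.ι) → Coalgebra.Repr k (r.left i) (H × H) := fun i => ℛ k (r.left i) with hr₁
  set r₂ : (i : r.ι) → Coalgebra.Repr k (r.right i) (H × H) := fun i => ℛ k (r.right i) with hr₂
  have key := Coalgebra.sum_tmul_tmul_eq (R := k) r r₁ r₂
  apply_fun (TensorProduct.map (LinearMap.mul' k H ∘ₗ LinearMap.rTensor H S)
      (LinearMap.mulLeft k (S x)) ∘ₗ (TensorProduct.assoc k H H H).symm.toLinearMap) at key
  simp only [map_sum, LinearMap.comp_apply, LinearEquiv.coe_coe, TensorProduct.assoc_symm_tmul,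
    TensorProduct.map_tmul, LinearMap.rTensor_tmul, LinearMap.mul'_apply,
    LinearMap.mulLeft_apply] at key
  have lhs : myconv (((TensorProduct.mk k H H).flip (S x)) ∘ₗ S) (Dmap (k := k)) y
      = ∑ i ∈ r.index, ∑ j ∈ (r₂ i).index,
          (S (r.left i) * (r₂ i).left j) ⊗ₜ[k] (S x * (r₂ i).right j) := by
    rw [myconv_repr _ _ r]
    refine Finset.sum_congr rfl fun i _ => ?_
    rw [show (Dmap (k := k) (r.right i)) = ∑ j ∈ (r₂ i).index,
        (r₂ i).left j ⊗ₜ[k] (r₂ i).right j from ((r₂ i).eq).symm, Finset.mul_sum]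
    refine Finset.sum_congr rfl fun j _ => ?_
    simp [Algebra.TensorProduct.tmul_mul_tmul]
  rw [lhs, ← key]
  have collapse : ∀ i ∈ r.index,
      ∑ j ∈ (r₁ i).index, (S ((r₁ i).left j) * (r₁ i).right j) ⊗ₜ[k] (S x * r.right i)
        = Coalgebra.counit (R := k) (r.left i) • ((1 : H) ⊗ₜ[k] (S x * r.right i)) := by
    intro i _
    rw [← TensorProduct.sum_tmul, sum_antipode_mul_eq_smul (r₁ i), TensorProduct.smul_tmul']
  rw [Finset.sum_congr rfl collapse]
  have final := Coalgebra.sum_counit_tmul_eq (R := k) r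
  apply_fun (TensorProduct.map LinearMap.id (LinearMap.mulLeft k (S x))) at final
  apply_fun (TensorProduct.lid k H) at final
  simp only [map_sum, TensorProduct.map_tmul, LinearMap.id_coe, id_eq,
    LinearMap.mulLeft_apply, TensorProduct.lid_tmul, mul_one] at final
  calc ∑ i ∈ r.index, Coalgebra.counit (R := k) (r.left i) • ((1:H) ⊗ₜ[k] (S x * r.right i))
      = ∑ i ∈ r.index, (1:H) ⊗ₜ[k] (Coalgebra.counit (R := k) (r.left i) • (S x * r.right i)) := by
        exact Finset.sum_congr rfl fun i _ => (TensorProduct.tmul_smul _ _ _).symm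
    _ = (1:H) ⊗ₜ[k] (∑ i ∈ r.index, Coalgebra.counit (R := k) (r.left i) • (S x * r.right i)) := by
        rw [TensorProduct.tmul_sum]
    _ = 1 ⊗ₜ[k] (S x * y) := by rw [final, one_smul]

end Hopf2

section Hopf3
open HopfAlgebra
variable {k H : Type*} [CommSemiring k] [CommSemiring H] [HopfAlgebra k H]

noncomputable def gmap : H →ₗ[k] H ⊗[k] H :=
  TensorProduct.map (antipode (R := k)) (antipode (R := k)) ∘ₗ
    (TensorProduct.comm k H H).toLinearMap ∘ₗ Dmap

lemma myconv_g_D : myconv (gmap (k := k) (H := H)) Dmap = convOne := by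
  ext a
  set S : H →ₗ[k] H := antipode (R := k) with hS
  set r := ℛ k a with hr
  set r₁ : (i : r.ι) → Coalgebra.Repr k (r.left i) (H × H) := fun i => ℛ k (r.left i) with hr₁
  set r₂ : (i : r.ι) → Coalgebra.Repr k (r.right i) (H × H) := fun i => ℛ k (r.right i) with hr₂
  have key := Coalgebra.sum_tmul_tmul_eq (R := k) r r₁ r₂
  apply_fun (LinearMap.mul' k (H ⊗[k] H) ∘ₗ
      TensorProduct.map (TensorProduct.map S S ∘ₗ (TensorProduct.comm k H H).toLinearMap)
        (Dmap (k := k)) ∘ₗ (TensorProduct.assoc k H H H).symm.toLinearMap) at key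
  simp only [map_sum, LinearMap.comp_apply, LinearEquiv.coe_coe, TensorProduct.assoc_symm_tmul,
    TensorProduct.map_tmul, TensorProduct.comm_tmul, LinearMap.mul'_apply] at key
  have lhs : myconv (gmap (k := k)) (Dmap (k := k)) a
      = ∑ i ∈ r.index, ∑ j ∈ (r₁ i).index,
          (S ((r₁ i).right j) ⊗ₜ[k] S ((r₁ i).left j)) * Dmap (k := k) (r.right i) := by
    rw [myconv_repr _ _ r]
    refine Finset.sum_congr rfl fun i _ => ?_
    have : gmap (k := k) (r.left i) = ∑ j ∈ (r₁ i).index,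
        S ((r₁ i).right j) ⊗ₜ[k] S ((r₁ i).left j) := by
      rw [gmap]
      simp only [LinearMap.comp_apply, LinearEquiv.coe_coe]
      rw [show (Dmap (k := k) (r.left i)) = ∑ j ∈ (r₁ i).index,
          (r₁ i).left j ⊗ₜ[k] (r₁ i).right j from ((r₁ i).eq).symm]
      simp [TensorProduct.comm_tmul, hS]
    rw [this, Finset.sum_mul]
  have rhs : ∀ i ∈ r.index,
      ∑ j ∈ (r₂ i).index, (S ((r₂ i).left j) ⊗ₜ[k] S (r.left i)) * Dmap (k := k) ((r₂ i).right j)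
        = (1 : H) ⊗ₜ[k] (S (r.left i) * r.right i) := by
    intro i _
    have := theta (k := k) (r.left i) (r.right i)
    rw [myconv_repr _ _ (r₂ i)] at this
    simpa using this
  rw [lhs, key, Finset.sum_congr rfl rhs, ← TensorProduct.tmul_sum,
    sum_antipode_mul_eq_smul r]
  simp only [convOne, LinearMap.comp_apply, Algebra.linearMap_apply,
    Algebra.algebraMap_eq_smul_one, TensorProduct.tmul_smul, TensorProduct.smul_tmul',
    Algebra.TensorProduct.one_def]
end Hopf3

section Hopf4
open HopfAlgebra
variable {k H : Type*} [CommSemiring k] [CommSemiring H] [HopfAlgebra k H]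

lemma comul_antipode_eq :
    (Dmap (k := k) (H := H)) ∘ₗ antipode k = gmap := by
  have h1 : myconv (gmap (k := k) (H := H)) (myconv Dmap (Dmap ∘ₗ antipode k))
      = Dmap ∘ₗ antipode k := by
    rw [← myconv_assoc, myconv_g_D, myconv_one_left]
  rw [← h1, myconv_D_DS, myconv_one_right]

lemma comul_antipode_apply (h : H) :
    Coalgebra.comul (R := k) (antipode (R := k) h) =
      TensorProduct.map (antipode (R := k)) (antipode (R := k))
        ((TensorProduct.comm k H H) (Coalgebra.comul (R := k) h)) := by
  have := LinearMap.congr_fun (comul_antipode_eq (k := k) (H := H)) h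
  simpa [Dmap, gmap] using this

end Hopf4

section Comod
open HopfAlgebra

variable {k H A : Type*} [Field k] [CommRing H] [HopfAlgebra k H] [CommRing A] [Algebra k A]

/-- The averaging operator `t a = ∑ a₀ * φ (S a₁)`. -/
noncomputable def tmap (ρ : A →ₐ[k] A ⊗[k] H) (φ : H →ₗ[k] A) : A →ₗ[k] A :=
  LinearMap.mul' k A ∘ₗ LinearMap.lTensor A (φ ∘ₗ antipode (R := k)) ∘ₗ ρ.toLinearMap

variable (ρ : A →ₐ[k] A ⊗[k] H) (φ : H →ₗ[k] A)

lemma rho_psi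
    (hφ : ρ.toLinearMap ∘ₗ φ = (LinearMap.rTensor H φ) ∘ₗ (Coalgebra.comul (R := k)))
    (h : H) :
    ρ (φ (antipode (R := k) h)) =
      TensorProduct.map (φ ∘ₗ antipode (R := k)) (antipode (R := k))
        ((TensorProduct.comm k H H) (Coalgebra.comul (R := k) h)) := by
  have h1 : ρ (φ (antipode (R := k) h))
      = LinearMap.rTensor H φ (Coalgebra.comul (R := k) (antipode (R := k) h)) :=
    LinearMap.congr_fun hφ (antipode (R := k) h)
  rw [h1, comul_antipode_apply]
  have : LinearMap.rTensor H φ ∘ₗ TensorProduct.map (antipode (R := k) (A := H)) (antipode (R := k))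
      = TensorProduct.map (φ ∘ₗ antipode (R := k)) (antipode (R := k)) := by
    apply TensorProduct.ext'
    intro x y
    simp
  exact LinearMap.congr_fun this _

end Comod

section Comod2
open HopfAlgebra

variable {k H A : Type*} [Field k] [CommRing H] [HopfAlgebra k H] [CommRing A] [Algebra k A]
variable (ρ : A →ₐ[k] A ⊗[k] H) (φ : H →ₗ[k] A)

lemma kappa_eq
    (hcoassoc : (TensorProduct.assoc k A H H).toLinearMap ∘ₗ
        (LinearMap.rTensor H ρ.toLinearMap) ∘ₗ ρ.toLinearMap
      = (LinearMap.lTensor A (Coalgebra.comul (R := k))) ∘ₗ ρ.toLinearMap)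
    (hcounit : (TensorProduct.rid k A).toLinearMap ∘ₗ
        (LinearMap.lTensor A (Coalgebra.counit (R := k))) ∘ₗ ρ.toLinearMap = LinearMap.id)
    (x : A) :
    LinearMap.mul' k (A ⊗[k] H)
      (TensorProduct.map ρ.toLinearMap (((TensorProduct.mk k A H) 1) ∘ₗ antipode (R := k))
        (ρ x)) = x ⊗ₜ[k] (1 : H) := by
  set S : H →ₗ[k] H := antipode (R := k) with hS
  set χ : A ⊗[k] (H ⊗[k] H) →ₗ[k] A ⊗[k] H :=
    LinearMap.lTensor A (LinearMap.mul' k H ∘ₗ LinearMap.lTensor H S) with hχ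
  -- step (a): rewrite through the associator
  have inner : ∀ (v : A ⊗[k] H) (h : H),
      LinearMap.mul' k (A ⊗[k] H) (v ⊗ₜ[k] ((1:A) ⊗ₜ[k] S h))
        = χ ((TensorProduct.assoc k A H H) (v ⊗ₜ[k] h)) := by
    intro v h
    induction v using TensorProduct.induction_on with
    | zero =>
        rw [TensorProduct.zero_tmul, TensorProduct.zero_tmul, LinearMap.map_zero,
          (TensorProduct.assoc k A H H).map_zero, LinearMap.map_zero]
    | tmul y h' =>
        simp [hχ, Algebra.TensorProduct.tmul_mul_tmul]
    | add v₁ v₂ ih₁ ih₂ =>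
        rw [TensorProduct.add_tmul, TensorProduct.add_tmul, map_add, map_add, map_add, ih₁, ih₂]
  have main : LinearMap.mul' k (A ⊗[k] H) ∘ₗ
        TensorProduct.map ρ.toLinearMap (((TensorProduct.mk k A H) 1) ∘ₗ S)
      = χ ∘ₗ (TensorProduct.assoc k A H H).toLinearMap ∘ₗ LinearMap.rTensor H ρ.toLinearMap := by
    apply TensorProduct.ext'
    intro y h
    simpa using inner (ρ y) h
  have main' := LinearMap.congr_fun main (ρ x)
  simp only [LinearMap.comp_apply, LinearEquiv.coe_coe] at main'
  rw [main']
  have h2 : (TensorProduct.assoc k A H H) (LinearMap.rTensor H ρ.toLinearMap (ρ.toLinearMap x))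
      = LinearMap.lTensor A (Coalgebra.comul (R := k)) (ρ.toLinearMap x) :=
    LinearMap.congr_fun hcoassoc x
  simp only [AlgHom.toLinearMap_apply] at h2 ⊢
  rw [h2, ← LinearMap.comp_apply, ← LinearMap.lTensor_comp]
  have h3 : (LinearMap.mul' k H ∘ₗ LinearMap.lTensor H S) ∘ₗ Coalgebra.comul (R := k)
      = Algebra.linearMap k H ∘ₗ Coalgebra.counit := by
    rw [LinearMap.comp_assoc]
    exact mul_antipode_lTensor_comul
  rw [h3, LinearMap.lTensor_comp, LinearMap.comp_apply]
  have h4 : ∀ w : A ⊗[k] k,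
      LinearMap.lTensor A (Algebra.linearMap k H) w = (TensorProduct.rid k A w) ⊗ₜ[k] (1 : H) := by
    intro w
    induction w using TensorProduct.induction_on with
    | zero => simp
    | tmul y c =>
        simp [Algebra.algebraMap_eq_smul_one, TensorProduct.rid_tmul,
          TensorProduct.tmul_smul, TensorProduct.smul_tmul']
    | add w₁ w₂ ih₁ ih₂ => simp only [map_add, ih₁, ih₂, TensorProduct.add_tmul]
  rw [h4]
  have h5 : TensorProduct.rid k A (LinearMap.lTensor A (Coalgebra.counit (R := k))
      (ρ.toLinearMap x)) = x := LinearMap.congr_fun hcounit x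
  simp only [AlgHom.toLinearMap_apply] at h5
  rw [h5]

end Comod2

section Comod3
open HopfAlgebra

variable {k H A : Type*} [Field k] [CommRing H] [HopfAlgebra k H] [CommRing A] [Algebra k A]
variable (ρ : A →ₐ[k] A ⊗[k] H) (φ : H →ₗ[k] A)

lemma tmap_coinv
    (hcoassoc : (TensorProduct.assoc k A H H).toLinearMap ∘ₗ
        (LinearMap.rTensor H ρ.toLinearMap) ∘ₗ ρ.toLinearMap
      = (LinearMap.lTensor A (Coalgebra.comul (R := k))) ∘ₗ ρ.toLinearMap)
    (hcounit : (TensorProduct.rid k A).toLinearMap ∘ₗ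
        (LinearMap.lTensor A (Coalgebra.counit (R := k))) ∘ₗ ρ.toLinearMap = LinearMap.id)
    (hφ : ρ.toLinearMap ∘ₗ φ = (LinearMap.rTensor H φ) ∘ₗ (Coalgebra.comul (R := k)))
    (a : A) :
    ρ (tmap ρ φ a) = tmap ρ φ a ⊗ₜ[k] (1 : H) := by
  set S : H →ₗ[k] H := antipode (R := k) with hS
  set ψ : H →ₗ[k] A := φ ∘ₗ S with hψ
  set Φ : A ⊗[k] (H ⊗[k] H) →ₗ[k] A ⊗[k] H :=
    LinearMap.mul' k (A ⊗[k] H) ∘ₗ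
      TensorProduct.map ρ.toLinearMap
        (TensorProduct.map ψ S ∘ₗ (TensorProduct.comm k H H).toLinearMap) with hΦ
  have step1 : ∀ u : A ⊗[k] H,
      ρ (LinearMap.mul' k A (LinearMap.lTensor A ψ u))
        = Φ (LinearMap.lTensor A (Coalgebra.comul (R := k)) u) := by
    intro u
    induction u using TensorProduct.induction_on with
    | zero => simp
    | tmul x h =>
        simp only [LinearMap.lTensor_tmul, LinearMap.mul'_apply, map_mul, hΦ,
          LinearMap.comp_apply, TensorProduct.map_tmul, LinearEquiv.coe_coe]
        rw [hψ, LinearMap.comp_apply, rho_psi ρ φ hφ h]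
        rfl
    | add u₁ u₂ ih₁ ih₂ => simp only [map_add, ih₁, ih₂]
  have step2 : ∀ u : A ⊗[k] H,
      Φ ((TensorProduct.assoc k A H H) (LinearMap.rTensor H ρ.toLinearMap u))
        = (LinearMap.mul' k A (LinearMap.lTensor A ψ u)) ⊗ₜ[k] (1 : H) := by
    have inner2 : ∀ (v : A ⊗[k] H) (h : H),
        Φ ((TensorProduct.assoc k A H H) (v ⊗ₜ[k] h))
          = LinearMap.mul' k (A ⊗[k] H)
              (TensorProduct.map ρ.toLinearMap (((TensorProduct.mk k A H) 1) ∘ₗ S) v)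
            * ((ψ h) ⊗ₜ[k] (1 : H)) := by
      intro v h
      induction v using TensorProduct.induction_on with
      | zero =>
          rw [TensorProduct.zero_tmul, (TensorProduct.assoc k A H H).map_zero,
            LinearMap.map_zero, LinearMap.map_zero, LinearMap.map_zero, zero_mul]
      | tmul y h' =>
          simp only [TensorProduct.assoc_tmul, hΦ, LinearMap.comp_apply,
            TensorProduct.map_tmul, LinearEquiv.coe_coe, TensorProduct.comm_tmul,
            LinearMap.mul'_apply, TensorProduct.mk_apply]
          rw [mul_assoc, Algebra.TensorProduct.tmul_mul_tmul, one_mul, mul_one]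
      | add v₁ v₂ ih₁ ih₂ =>
          rw [TensorProduct.add_tmul, (TensorProduct.assoc k A H H).map_add,
            LinearMap.map_add, ih₁, ih₂, LinearMap.map_add, LinearMap.map_add, add_mul]
    intro u
    induction u using TensorProduct.induction_on with
    | zero =>
        rw [LinearMap.map_zero, (TensorProduct.assoc k A H H).map_zero, LinearMap.map_zero,
          LinearMap.map_zero, LinearMap.map_zero, TensorProduct.zero_tmul]
    | tmul x h =>
        rw [LinearMap.rTensor_tmul, inner2 (ρ.toLinearMap x) h]
        simp only [AlgHom.toLinearMap_apply]
        rw [kappa_eq ρ hcoassoc hcounit x]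
        rw [Algebra.TensorProduct.tmul_mul_tmul, one_mul]
        simp only [LinearMap.lTensor_tmul, LinearMap.mul'_apply]
    | add u₁ u₂ ih₁ ih₂ =>
        rw [LinearMap.map_add, (TensorProduct.assoc k A H H).map_add, LinearMap.map_add,
          ih₁, ih₂, map_add, map_add, TensorProduct.add_tmul]
  have hca : (TensorProduct.assoc k A H H) (LinearMap.rTensor H ρ.toLinearMap (ρ.toLinearMap a))
      = LinearMap.lTensor A (Coalgebra.comul (R := k)) (ρ.toLinearMap a) :=
    LinearMap.congr_fun hcoassoc a
  have s1 := step1 (ρ.toLinearMap a)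
  rw [← hca, step2 (ρ.toLinearMap a)] at s1
  simpa [tmap, hψ, hS] using s1

lemma tmap_one (hφ1 : φ 1 = 1) : tmap ρ φ 1 = 1 := by
  simp only [tmap, LinearMap.comp_apply, AlgHom.toLinearMap_apply, map_one,
    Algebra.TensorProduct.one_def, LinearMap.lTensor_tmul, LinearMap.mul'_apply,
    LinearMap.comp_apply, my_antipode_one, hφ1, one_mul]

lemma tmap_mul_coinv (b a : A) (hb : ρ b = b ⊗ₜ[k] 1) :
    tmap ρ φ (b * a) = b * tmap ρ φ a := by
  have key : ∀ u : A ⊗[k] H,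
      LinearMap.mul' k A (LinearMap.lTensor A (φ ∘ₗ antipode (R := k))
        ((b ⊗ₜ[k] (1:H)) * u))
      = b * LinearMap.mul' k A (LinearMap.lTensor A (φ ∘ₗ antipode (R := k)) u) := by
    intro u
    induction u using TensorProduct.induction_on with
    | zero => simp
    | tmul x h =>
        rw [Algebra.TensorProduct.tmul_mul_tmul, one_mul]
        simp only [LinearMap.lTensor_tmul, LinearMap.mul'_apply, mul_assoc]
    | add u₁ u₂ ih₁ ih₂ => rw [mul_add, map_add, map_add, ih₁, ih₂, map_add, map_add, mul_add]
  have : ρ.toLinearMap (b * a) = (b ⊗ₜ[k] (1:H)) * ρ.toLinearMap a := by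
    simp only [AlgHom.toLinearMap_apply, map_mul, hb]
  simp only [tmap, LinearMap.comp_apply, this, key]

end Comod3

set_option maxHeartbeats 2000000 in
set_option synthInstance.maxHeartbeats 1000000 in
/-- Let `H` be a commutative Hopf algebra over a field `k`, `A` a right `H`-comodule algebra
with structure map `ρ : A → A ⊗ H` and coinvariant subalgebra `B = A^{coH}`, and suppose
there is a total integral `φ : H → A`.  Then for every `B`-module `M`, the map
`M → (M ⊗_B A)^{coH}`, `m ↦ m ⊗ 1`, is an isomorphism (of `B`-modules):
it lands in the coinvariants of the induced coaction `ρ'` on `M ⊗_B A`, is injective,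
and hits every coinvariant element. -/
theorem stmt11 (k H A : Type*) [Field k] [CommRing H] [HopfAlgebra k H]
    [CommRing A] [Algebra k A] (ρ : A →ₐ[k] A ⊗[k] H)
    (hcoassoc : (TensorProduct.assoc k A H H).toLinearMap ∘ₗ
        (LinearMap.rTensor H ρ.toLinearMap) ∘ₗ ρ.toLinearMap
      = (LinearMap.lTensor A (Coalgebra.comul (R := k))) ∘ₗ ρ.toLinearMap)
    (hcounit : (TensorProduct.rid k A).toLinearMap ∘ₗ
        (LinearMap.lTensor A (Coalgebra.counit (R := k))) ∘ₗ ρ.toLinearMap = LinearMap.id)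
    (φ : H →ₗ[k] A) (hφ1 : φ 1 = 1)
    (hφ : ρ.toLinearMap ∘ₗ φ = (LinearMap.rTensor H φ) ∘ₗ (Coalgebra.comul (R := k)))
    (M : Type*) [AddCommGroup M] [Module k M]
    [Module ↥(coinvariants k H A ρ) M] [IsScalarTower k ↥(coinvariants k H A ρ) M]
    [SMulCommClass ↥(coinvariants k H A ρ) k M]
    (ρ' : M ⊗[↥(coinvariants k H A ρ)] A →ₗ[k]
        (M ⊗[↥(coinvariants k H A ρ)] A) ⊗[k] H)
    (hρ' : ∀ (m : M) (a : A),
        ρ' (m ⊗ₜ a) =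
          (LinearMap.rTensor H
            (((TensorProduct.mk ↥(coinvariants k H A ρ) M A) m).restrictScalars k)) (ρ a)) :
    (∀ m : M, ρ' (m ⊗ₜ (1 : A)) = (m ⊗ₜ (1 : A)) ⊗ₜ (1 : H)) ∧
    Function.Injective
      (fun m : M => (m ⊗ₜ (1 : A) : M ⊗[↥(coinvariants k H A ρ)] A)) ∧
    (∀ x : M ⊗[↥(coinvariants k H A ρ)] A,
      ρ' x = x ⊗ₜ (1 : H) → ∃ m : M, m ⊗ₜ (1 : A) = x) := by
  classical
  -- the averaging operator lands in the coinvariants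
  have ht : ∀ a : A, tmap ρ φ a ∈ coinvariants k H A ρ := fun a =>
    tmap_coinv ρ φ hcoassoc hcounit hφ a
  -- `T : A →ₗ[B] B`, `a ↦ t a`
  have hsmul : ∀ (b : ↥(coinvariants k H A ρ)) (a : A), b • a = (b : A) * a := fun b a => Algebra.smul_def b a
  set T : A →ₗ[↥(coinvariants k H A ρ)] ↥(coinvariants k H A ρ) :=
    { toFun := fun a => ⟨tmap ρ φ a, ht a⟩
      map_add' := fun a a' => Subtype.ext (map_add _ _ _)
      map_smul' := fun b a => Subtype.ext (by
        show tmap ρ φ (b • a) = ((b * ⟨tmap ρ φ a, ht a⟩ : ↥(coinvariants k H A ρ)) : A)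
        rw [hsmul b a, Subalgebra.coe_mul]
        exact tmap_mul_coinv ρ φ (b : A) a b.2) } with hT
  have hT1 : T 1 = 1 := Subtype.ext (tmap_one ρ φ hφ1)
  -- the retraction `G : M ⊗[B] A → M`
  set G : M ⊗[↥(coinvariants k H A ρ)] A →ₗ[↥(coinvariants k H A ρ)] M :=
    TensorProduct.lift (((LinearMap.lsmul ↥(coinvariants k H A ρ) M).comp T).flip) with hG
  have hGtmul : ∀ (m : M) (a : A), G (m ⊗ₜ a) = T a • m := by
    intro m a
    simp [hG, TensorProduct.lift.tmul]
  have hGone : ∀ m : M, G (m ⊗ₜ (1 : A)) = m := by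
    intro m
    rw [hGtmul, hT1, one_smul]
  -- `ψ = φ ∘ S`
  set ψ : H →ₗ[k] A := φ ∘ₗ HopfAlgebra.antipode (R := k) with hψ
  have hψ1 : ψ 1 = 1 := by
    rw [hψ, LinearMap.comp_apply, my_antipode_one, hφ1]
  -- the operator `F : (M ⊗[B] A) ⊗[k] H → M ⊗[B] A`, `z ⊗ h ↦ (1 ⊗ ψ h ·) z`
  set F : (M ⊗[↥(coinvariants k H A ρ)] A) ⊗[k] H →ₗ[k] M ⊗[↥(coinvariants k H A ρ)] A :=
    TensorProduct.lift (LinearMap.mk₂ k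
      (fun z h => (LinearMap.lTensor M (LinearMap.mulLeft ↥(coinvariants k H A ρ) (ψ h))).restrictScalars k z)
      (fun z z' h => by beta_reduce; rw [map_add])
      (fun c z h => by beta_reduce; rw [map_smul])
      (fun z h h' => by
        beta_reduce
        induction z using TensorProduct.induction_on with
        | zero => simp
        | tmul m a =>
            simp only [LinearMap.coe_restrictScalars, LinearMap.lTensor_tmul,
              LinearMap.mulLeft_apply, map_add, add_mul, TensorProduct.tmul_add]
        | add z₁ z₂ ih₁ ih₂ =>
            simp only [map_add] at ih₁ ih₂ ⊢
            rw [ih₁, ih₂]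
            abel)
      (fun c z h => by
        beta_reduce
        induction z using TensorProduct.induction_on with
        | zero => simp
        | tmul m a =>
            simp only [LinearMap.coe_restrictScalars, LinearMap.lTensor_tmul,
              LinearMap.mulLeft_apply, map_smul, smul_mul_assoc, TensorProduct.tmul_smul]
        | add z₁ z₂ ih₁ ih₂ =>
            simp only [map_add] at ih₁ ih₂ ⊢
            rw [ih₁, ih₂, smul_add])) with hF
  have hFtmul : ∀ (z : M ⊗[↥(coinvariants k H A ρ)] A) (h : H),
      F (z ⊗ₜ h) = (LinearMap.lTensor M (LinearMap.mulLeft ↥(coinvariants k H A ρ) (ψ h))).restrictScalars k z := by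
    intro z h
    rw [hF, TensorProduct.lift.tmul]
    rfl
  have hFone : ∀ z : M ⊗[↥(coinvariants k H A ρ)] A, F (z ⊗ₜ (1 : H)) = z := by
    intro z
    rw [hFtmul, hψ1, LinearMap.mulLeft_one]
    induction z using TensorProduct.induction_on with
    | zero => simp
    | tmul m a => simp
    | add z₁ z₂ ih₁ ih₂ => rw [map_add, ih₁, ih₂]
  -- part 1
  have part1 : ∀ m : M, ρ' (m ⊗ₜ (1 : A)) = (m ⊗ₜ (1 : A)) ⊗ₜ (1 : H) := by
    intro m
    rw [hρ' m 1, map_one, Algebra.TensorProduct.one_def, LinearMap.rTensor_tmul]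
    rfl
  refine ⟨part1, ?_, ?_⟩
  · -- injectivity
    intro m m' h
    have := congrArg G h
    rwa [hGone, hGone] at this
  · -- surjectivity onto coinvariants
    intro x hx
    -- key computation : F (ρ' z) is always in the range of `m ↦ m ⊗ 1`
    have key : ∀ (m : M) (a : A), F (ρ' (m ⊗ₜ a)) = (T a • m) ⊗ₜ (1 : A) := by
      intro m a
      rw [hρ' m a]
      have c2 : ∀ u : A ⊗[k] H,
          F ((LinearMap.rTensor H
              (((TensorProduct.mk ↥(coinvariants k H A ρ) M A) m).restrictScalars k)) u)
            = m ⊗ₜ (LinearMap.mul' k A (LinearMap.lTensor A ψ u)) := by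
        intro u
        induction u using TensorProduct.induction_on with
        | zero => simp
        | tmul y h =>
            rw [LinearMap.rTensor_tmul, hFtmul]
            simp only [LinearMap.coe_restrictScalars, TensorProduct.mk_apply,
              LinearMap.lTensor_tmul, LinearMap.mulLeft_apply, LinearMap.mul'_apply]
            rw [mul_comm]
        | add u₁ u₂ ih₁ ih₂ =>
            rw [map_add, map_add, ih₁, ih₂, map_add, map_add, TensorProduct.tmul_add]
      rw [c2 (ρ a)]
      have : (LinearMap.mul' k A (LinearMap.lTensor A ψ (ρ a))) = tmap ρ φ a := rfl
      rw [this]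
      have : m ⊗ₜ[↥(coinvariants k H A ρ)] (tmap ρ φ a) = m ⊗ₜ[↥(coinvariants k H A ρ)] (T a • (1 : A)) := by
        rw [hsmul (T a) 1, mul_one]
        rfl
      rw [this, ← TensorProduct.smul_tmul]
    have hmem : ∀ z : M ⊗[↥(coinvariants k H A ρ)] A, ∃ m : M, m ⊗ₜ (1 : A) = F (ρ' z) := by
      intro z
      induction z using TensorProduct.induction_on with
      | zero => exact ⟨0, by simp⟩
      | tmul m a => exact ⟨T a • m, (key m a).symm⟩
      | add z₁ z₂ ih₁ ih₂ =>
          obtain ⟨m₁, hm₁⟩ := ih₁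
          obtain ⟨m₂, hm₂⟩ := ih₂
          exact ⟨m₁ + m₂, by rw [map_add, map_add, ← hm₁, ← hm₂, TensorProduct.add_tmul]⟩
    obtain ⟨m, hm⟩ := hmem x
    refine ⟨m, ?_⟩
    rwa [hx, hFone x] at hm
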